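/- There is no direction respecting 1-factorization M_1, …, M_6 of the hypercube Q_6 (with respect to the split into directions {1,2,3} and {4,5,6}) such that M_i ∪ M_j is a Hamilton cycle for every i ∈ {1, 2, 3} and j ∈ {4, 5, 6}. -/

import Mathlib

open SimpleGraph

/-- The hypercube graph `Q_d`: vertices are subsets of `{1,…,d}`, two subsets adjacent
iff they differ in exactly one element. -/
def cube (d : ℕ) : SimpleGraph (Finset (Fin d)) where
  Adj u v := (symmDiff u v).card = 1
  symm := ⟨fun u v h => by rwa [symmDiff_comm] at h⟩
  loopless := ⟨fun u h => by simp [symmDiff_self] at h⟩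

/-- `M` is a perfect matching of `G` (as a set of edges): `M` consists of edges of `G`
and every vertex lies in a unique edge of `M`. -/
def IsPM {V : Type*} (G : SimpleGraph V) (M : Set (Sym2 V)) : Prop :=
  M ⊆ G.edgeSet ∧ ∀ v : V, ∃! e, e ∈ M ∧ v ∈ e

/-- `M` is a 1-factorization of `G`: a partition of the edge set of `G` into
perfect matchings. -/
def IsFactorization {V : Type*} {ι : Type*} (G : SimpleGraph V) (M : ι → Set (Sym2 V)) : Prop :=
  (∀ i, IsPM G (M i)) ∧ (∀ i j, i ≠ j → Disjoint (M i) (M j)) ∧ (⋃ i, M i) = G.edgeSet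

/-- The edge set `E` forms a Hamilton cycle: there is a Hamiltonian cycle in the graph
with edge set `E` which uses every edge of `E`. -/
def IsHamCycleSet {V : Type*} [DecidableEq V] (E : Set (Sym2 V)) : Prop :=
  ∃ (v : V) (w : (SimpleGraph.fromEdgeSet E).Walk v v),
    w.IsHamiltonianCycle ∧ ∀ e ∈ E, e ∈ w.edges

/-- The directional matching `D_i` of `Q_d`: all edges in direction `i`, i.e. whose
endpoints differ exactly in the element `i`. -/
def dirMatching (d : ℕ) (i : Fin d) : Set (Sym2 (Finset (Fin d))) :=
  {e | ∃ u v : Finset (Fin d), e = s(u, v) ∧ symmDiff u v = {i}}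

/-- The edge set `M` only uses edges in directions belonging to `S`. -/
def UsesDirections {d : ℕ} (M : Set (Sym2 (Finset (Fin d)))) (S : Set (Fin d)) : Prop :=
  ∀ u v : Finset (Fin d), s(u, v) ∈ M → ∀ i ∈ symmDiff u v, i ∈ S

/-- A 1-factorization of `Q_{k+l}` is direction respecting (w.r.t. the split `k + l`)
if the first `k` matchings use only the first `k` directions and the last `l` matchings
use only the last `l` directions. -/
def DirectionRespecting (k l : ℕ) (M : Fin (k + l) → Set (Sym2 (Finset (Fin (k + l))))) : Prop :=
  ∀ i : Fin (k + l), UsesDirections (M i) {j : Fin (k + l) | ((j : ℕ) < k ↔ (i : ℕ) < k)}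

namespace S10


abbrev V6 := Finset (Fin 6)
abbrev EV := {v : V6 // v.card % 2 = 0}

lemma card_symmDiff_add (u v : V6) :
    ∃ k, u.card + v.card = (symmDiff u v).card + 2 * k := by
  refine ⟨(u ∩ v).card, ?_⟩
  have h1 : (u \ v).card + (u ∩ v).card = u.card := Finset.card_sdiff_add_card_inter u v
  have h2 : (v \ u).card + (v ∩ u).card = v.card := Finset.card_sdiff_add_card_inter v u
  have h3 : (symmDiff u v).card = (u \ v).card + (v \ u).card := by
    rw [symmDiff_def]
    exact Finset.card_union_of_disjoint (disjoint_sdiff_sdiff)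
  rw [Finset.inter_comm v u] at h2
  omega

lemma parity_flip {u v : V6} (h : (symmDiff u v).card = 1) :
    v.card % 2 = (u.card + 1) % 2 := by
  obtain ⟨k, hk⟩ := card_symmDiff_add u v
  omega

/-- Build a permutation of `EV` from a parity-preserving two-sided invertible map. -/
def mkE (g h : V6 → V6) (hg : ∀ v, (g v).card % 2 = v.card % 2)
    (hgh : ∀ v, h (g v) = v) (hhg : ∀ v, g (h v) = v) : Equiv.Perm EV where
  toFun x := ⟨g x.val, by rw [hg]; exact x.2⟩
  invFun x := ⟨h x.val, by
    have := hg (h x.val); rw [hhg] at this; rw [← this]; exact x.2⟩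
  left_inv x := Subtype.ext (hgh x.val)
  right_inv x := Subtype.ext (hhg x.val)

@[simp] lemma mkE_apply (g h : V6 → V6) (hg hgh hhg) (x : EV) :
    (mkE g h hg hgh hhg x).val = g x.val := rfl

/-- Sign of a fiber-preserving permutation is the product of the signs of its
restrictions to the fibers. -/
theorem sign_eq_prod_fiber_signs {X ι : Type*} [Fintype X] [DecidableEq X]
    [Fintype ι] [DecidableEq ι] (σ : Equiv.Perm X) (P : X → ι)
    (hP : ∀ x, P (σ x) = P x) :
    Equiv.Perm.sign σ =
      ∏ c : ι, Equiv.Perm.sign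
        (σ.subtypePerm (p := fun x => P x = c) (fun x => by rw [hP] : ∀ x, P (σ x) = c ↔ P x = c)) := by
  classical
  have hP' : ∀ x, P (σ.symm x) = P x := fun x => by
    have h2 := hP (σ.symm x); rw [Equiv.apply_symm_apply] at h2; exact h2.symm
  let τ : ι → Equiv.Perm X := fun c =>
    { toFun := fun x => if P x = c then σ x else x
      invFun := fun x => if P x = c then σ.symm x else x
      left_inv := fun x => by
        by_cases h : P x = c
        · simp [h, hP]
        · simp [h]
      right_inv := fun x => by
        by_cases h : P x = c
        · simp [h, hP']
        · simp [h] }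
  have hτ_apply : ∀ c x, τ c x = if P x = c then σ x else x := fun c x => rfl
  have hτ_sign : ∀ c, Equiv.Perm.sign (τ c) =
      Equiv.Perm.sign
        (σ.subtypePerm (p := fun x => P x = c) (fun x => by rw [hP] : ∀ x, P (σ x) = c ↔ P x = c)) := by
    intro c
    have h₁ : ∀ x, P (τ c x) = c ↔ P x = c := by
      intro x
      by_cases h : P x = c <;> simp [hτ_apply, h, hP]
    have h₂ : ∀ x, τ c x ≠ x → P x = c := by
      intro x hx
      by_contra h
      exact hx (by simp [hτ_apply, h])
    have he : (τ c).subtypePerm h₁ =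
        σ.subtypePerm (p := fun x => P x = c) (fun x => by rw [hP] : ∀ x, P (σ x) = c ↔ P x = c) := by
      ext x
      simp [Equiv.Perm.subtypePerm_apply, hτ_apply, x.2]
    rw [← Equiv.Perm.sign_subtypePerm (τ c) h₁ h₂, he]
  obtain ⟨l, hl, mem_l⟩ := Finite.exists_univ_list ι
  have key : ∀ (l' : List ι), l'.Nodup → ∀ x : X,
      ((l'.map τ).prod x = if P x ∈ l' then σ x else x) := by
    intro l'
    induction l' with
    | nil => intro _ x; simp
    | cons c t ih =>
      intro hnd x
      rw [List.map_cons, List.prod_cons, Equiv.Perm.mul_apply,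
        ih (List.nodup_cons.mp hnd).2 x]
      by_cases hx : P x ∈ t
      · rw [if_pos hx]
        have hne : P (σ x) ≠ c := by
          rw [hP]; intro h; exact (List.nodup_cons.mp hnd).1 (h ▸ hx)
        rw [hτ_apply, if_neg hne, if_pos (List.mem_cons_of_mem _ hx)]
      · rw [if_neg hx, hτ_apply]
        by_cases hc : P x = c
        · rw [if_pos hc, if_pos (by rw [hc]; exact List.mem_cons_self)]
        · rw [if_neg hc, if_neg (by
            intro h
            rcases List.mem_cons.mp h with h' | h'
            · exact hc h'
            · exact hx h')]
  have hprod : (l.map τ).prod = σ := by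
    ext x
    rw [key l hl x, if_pos (mem_l _)]
  have l_to_finset : l.toFinset = Finset.univ := by
    apply Finset.eq_univ_of_forall
    intro b
    exact List.mem_toFinset.mpr (mem_l b)
  calc Equiv.Perm.sign σ = Equiv.Perm.sign ((l.map τ).prod) := by rw [hprod]
    _ = ((l.map τ).map Equiv.Perm.sign).prod := map_list_prod Equiv.Perm.sign _
    _ = (l.map fun c => Equiv.Perm.sign (τ c)).prod := by rw [List.map_map]; rfl
    _ = (l.map fun c => Equiv.Perm.sign
        (σ.subtypePerm (p := fun x => P x = c) (fun x => by rw [hP] : ∀ x, P (σ x) = c ↔ P x = c))).prod := by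
        simp_rw [hτ_sign]
    _ = _ := by rw [← l_to_finset, List.prod_toFinset _ hl]


abbrev Cls (S : Finset (Fin 6)) (r : ℕ) := {a : Finset (Fin 6) // a ⊆ S ∧ a.card % 2 = r}




set_option synthInstance.maxHeartbeats 2000000 in
set_option synthInstance.maxSize 2048 in
set_option maxHeartbeats 4000000 in
theorem decL : ∀ r : Fin 2, ∀ π₁ : Equiv.Perm (Cls {0,1,2} r.val),
    (∀ x, (symmDiff (symmDiff x.val {0}) (π₁ x).val).card = 1) →
    ∀ π₂ : Equiv.Perm (Cls {0,1,2} r.val),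
    ((∀ x, (symmDiff (symmDiff x.val {0}) (π₂ x).val).card = 1) ∧ ∀ x, π₂ x ≠ π₁ x) →
    ∀ π₃ : Equiv.Perm (Cls {0,1,2} r.val),
    ((∀ x, (symmDiff (symmDiff x.val {0}) (π₃ x).val).card = 1) ∧ (∀ x, π₃ x ≠ π₁ x) ∧
      (∀ x, π₃ x ≠ π₂ x)) →
    Equiv.Perm.sign π₁ * Equiv.Perm.sign π₂ * Equiv.Perm.sign π₃ = 1 := by decide

set_option synthInstance.maxHeartbeats 2000000 in
set_option synthInstance.maxSize 2048 in
set_option maxHeartbeats 4000000 in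
theorem decR : ∀ r : Fin 2, ∀ π₁ : Equiv.Perm (Cls {3,4,5} r.val),
    (∀ x, (symmDiff (symmDiff x.val {3}) (π₁ x).val).card = 1) →
    ∀ π₂ : Equiv.Perm (Cls {3,4,5} r.val),
    ((∀ x, (symmDiff (symmDiff x.val {3}) (π₂ x).val).card = 1) ∧ ∀ x, π₂ x ≠ π₁ x) →
    ∀ π₃ : Equiv.Perm (Cls {3,4,5} r.val),
    ((∀ x, (symmDiff (symmDiff x.val {3}) (π₃ x).val).card = 1) ∧ (∀ x, π₃ x ≠ π₁ x) ∧
      (∀ x, π₃ x ≠ π₂ x)) →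
    Equiv.Perm.sign π₁ * Equiv.Perm.sign π₂ * Equiv.Perm.sign π₃ = 1 := by decide

set_option synthInstance.maxHeartbeats 2000000 in
set_option synthInstance.maxSize 2048 in
set_option maxHeartbeats 4000000 in
theorem decK : ∀ r : Fin 2, ∀ π : Equiv.Perm (Cls {0,3} r.val),
    (∀ x, (π x).val = symmDiff x.val {0,3}) → Equiv.Perm.sign π = -1 := by decide

set_option maxHeartbeats 4000000 in
theorem decKprod :
    (∏ c : Finset (Fin 6), (if c ⊆ {1,2,4,5} then (-1 : ℤˣ) else 1)) = 1 := by decide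







lemma split_ST (S T : Finset (Fin 6)) (hun : S ∪ T = Finset.univ) (u : V6) :
    (u ∩ S) ∪ (u ∩ T) = u := by
  rw [← Finset.inter_union_distrib_left, hun, Finset.inter_univ]

lemma disjST (S T : Finset (Fin 6)) (hdisj : S ∩ T = ∅) : Disjoint S T :=
  Finset.disjoint_iff_inter_eq_empty.mpr hdisj

lemma card_split (S T : Finset (Fin 6)) (hun : S ∪ T = Finset.univ)
    (hdisj : S ∩ T = ∅) (u : V6) : (u ∩ S).card + (u ∩ T).card = u.card := by
  rw [← Finset.card_union_of_disjoint
    (Finset.disjoint_of_subset_left Finset.inter_subset_right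
      (Finset.disjoint_of_subset_right Finset.inter_subset_right (disjST S T hdisj))),
    split_ST S T hun]

lemma union_c_inter_S (S T : Finset (Fin 6)) (hdisj : S ∩ T = ∅)
    {a c : Finset (Fin 6)} (ha : a ⊆ S) (hc : c ⊆ T) : (a ∪ c) ∩ S = a := by
  rw [Finset.union_inter_distrib_right, Finset.inter_eq_left.mpr ha, Finset.union_eq_left]
  intro x hx
  obtain ⟨hx1, hx2⟩ := Finset.mem_inter.mp hx
  have : x ∈ S ∩ T := Finset.mem_inter.mpr ⟨hx2, hc hx1⟩
  rw [hdisj] at this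
  simp at this

lemma union_c_inter_T (S T : Finset (Fin 6)) (hdisj : S ∩ T = ∅)
    {a c : Finset (Fin 6)} (ha : a ⊆ S) (hc : c ⊆ T) : (a ∪ c) ∩ T = c := by
  rw [Finset.union_inter_distrib_right, Finset.inter_eq_left.mpr hc, Finset.union_eq_right]
  intro x hx
  obtain ⟨hx1, hx2⟩ := Finset.mem_inter.mp hx
  have : x ∈ S ∩ T := Finset.mem_inter.mpr ⟨ha hx1, hx2⟩
  rw [hdisj] at this
  simp at this

/-- The fiber of `x ↦ x ∩ T` over `c` inside `EV`, identified with a parity class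
of subsets of `S`. -/
def fibEquiv (S T : Finset (Fin 6)) (hun : S ∪ T = Finset.univ) (hdisj : S ∩ T = ∅)
    (c : Finset (Fin 6)) (hc : c ⊆ T) :
    {x : EV // x.val ∩ T = c} ≃ Cls S (c.card % 2) where
  toFun x := ⟨x.val.val ∩ S, Finset.inter_subset_right, by
    have h1 := card_split S T hun hdisj x.val.val
    have h2 := x.val.2
    rw [x.2] at h1
    omega⟩
  invFun a := ⟨⟨a.val ∪ c, by
      have hd : Disjoint a.val c :=
        Finset.disjoint_of_subset_left a.2.1
          (Finset.disjoint_of_subset_right hc (disjST S T hdisj))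
      rw [Finset.card_union_of_disjoint hd]
      have := a.2.2
      omega⟩,
    union_c_inter_T S T hdisj a.2.1 hc⟩
  left_inv x := by
    apply Subtype.ext; apply Subtype.ext
    show (x.val.val ∩ S) ∪ c = x.val.val
    have h := split_ST S T hun x.val.val
    rw [x.2] at h
    exact h
  right_inv a := by
    apply Subtype.ext
    show (a.val ∪ c) ∩ S = a.val
    exact union_c_inter_S S T hdisj a.2.1 hc

lemma fibEquiv_apply_val (S T : Finset (Fin 6)) (hun) (hdisj) (c : Finset (Fin 6)) (hc : c ⊆ T)
    (x) : ((fibEquiv S T hun hdisj c hc) x).val = x.val.val ∩ S := rfl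

lemma fibEquiv_symm_apply_val (S T : Finset (Fin 6)) (hun) (hdisj) (c : Finset (Fin 6))
    (hc : c ⊆ T) (a) : ((fibEquiv S T hun hdisj c hc).symm a).val.val = a.val ∪ c := rfl


lemma symmDiff_inter (a b s : Finset (Fin 6)) :
    (symmDiff a b) ∩ s = symmDiff (a ∩ s) (b ∩ s) := by
  simp only [← Finset.inf_eq_inter]
  exact inf_symmDiff_distrib_right a b s

theorem sign_side_prod (S T : Finset (Fin 6)) (hun : S ∪ T = Finset.univ)
    (hdisj : S ∩ T = ∅) (z : Fin 6)
    (dec : ∀ r : Fin 2, ∀ π₁ : Equiv.Perm (Cls S r.val),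
      (∀ x, (symmDiff (symmDiff x.val {z}) (π₁ x).val).card = 1) →
      ∀ π₂ : Equiv.Perm (Cls S r.val),
      ((∀ x, (symmDiff (symmDiff x.val {z}) (π₂ x).val).card = 1) ∧ ∀ x, π₂ x ≠ π₁ x) →
      ∀ π₃ : Equiv.Perm (Cls S r.val),
      ((∀ x, (symmDiff (symmDiff x.val {z}) (π₃ x).val).card = 1) ∧ (∀ x, π₃ x ≠ π₁ x) ∧
        (∀ x, π₃ x ≠ π₂ x)) →
      Equiv.Perm.sign π₁ * Equiv.Perm.sign π₂ * Equiv.Perm.sign π₃ = 1)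
    (σs : Fin 3 → Equiv.Perm EV)
    (hT : ∀ k (x : EV), (σs k x).val ∩ T = x.val ∩ T)
    (hcard : ∀ k (x : EV), (symmDiff (symmDiff (x.val ∩ S) {z}) ((σs k x).val ∩ S)).card = 1)
    (hne : ∀ k l, k ≠ l → ∀ x : EV, (σs k x).val ∩ S ≠ (σs l x).val ∩ S) :
    Equiv.Perm.sign (σs 0 * σs 1 * σs 2) = 1 := by
  have hPσ : ∀ x : EV, ((σs 0 * σs 1 * σs 2) x).val ∩ T = x.val ∩ T := fun x => by
    simp only [Equiv.Perm.mul_apply, hT]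
  rw [sign_eq_prod_fiber_signs (σs 0 * σs 1 * σs 2) (fun x => x.val ∩ T) hPσ]
  apply Finset.prod_eq_one
  intro c _
  by_cases hc : c ⊆ T
  · have hfi : ∀ k, ∀ x : EV, (σs k x).val ∩ T = c ↔ x.val ∩ T = c := fun k x => by rw [hT]
    set e := fibEquiv S T hun hdisj c hc with he
    set π : Fin 3 → Equiv.Perm (Cls S (c.card % 2)) :=
      fun k => e.permCongr ((σs k).subtypePerm (hfi k)) with hπ
    have hval : ∀ k a, (π k a).val = (σs k ((e.symm a).val)).val ∩ S := fun k a => rfl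
    have hsymmval : ∀ a : Cls S (c.card % 2), ((e.symm a).val).val = a.val ∪ c := fun a => rfl
    have hcond : ∀ k a, (symmDiff (symmDiff a.val {z}) ((π k a)).val).card = 1 := by
      intro k a
      have h2 : (a.val ∪ c) ∩ S = a.val := union_c_inter_S S T hdisj a.2.1 hc
      have h3 := hcard k (e.symm a).val
      rw [hsymmval a, h2] at h3
      rw [hval k a]
      exact h3
    have hdistinct : ∀ k l, k ≠ l → ∀ a, π k a ≠ π l a := by
      intro k l hkl a h
      have hv : (π k a).val = (π l a).val := congrArg Subtype.val h
      rw [hval, hval] at hv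
      exact hne k l hkl _ hv
    have hmain : e.permCongr ((σs 0 * σs 1 * σs 2).subtypePerm
        (fun x => by rw [hPσ] : ∀ x : EV, ((σs 0 * σs 1 * σs 2) x).val ∩ T = c ↔ x.val ∩ T = c))
        = π 0 * π 1 * π 2 := by
      ext a
      simp only [hπ, Equiv.permCongr_apply, Equiv.Perm.mul_apply,
        Equiv.Perm.subtypePerm_apply, Equiv.symm_apply_apply]
    calc Equiv.Perm.sign ((σs 0 * σs 1 * σs 2).subtypePerm _)
        = Equiv.Perm.sign (e.permCongr ((σs 0 * σs 1 * σs 2).subtypePerm _)) :=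
          (Equiv.Perm.sign_permCongr e _).symm
      _ = Equiv.Perm.sign (π 0) * Equiv.Perm.sign (π 1) * Equiv.Perm.sign (π 2) := by
          rw [hmain, map_mul, map_mul]
      _ = 1 := dec ⟨c.card % 2, by omega⟩ (π 0) (hcond 0) (π 1)
            ⟨hcond 1, fun a => hdistinct 1 0 (by decide) a⟩ (π 2)
            ⟨hcond 2, fun a => hdistinct 2 0 (by decide) a, fun a => hdistinct 2 1 (by decide) a⟩
  · have hempty : IsEmpty {x : EV // x.val ∩ T = c} :=
      ⟨fun x => hc (x.2 ▸ Finset.inter_subset_right)⟩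
    have h1 : (σs 0 * σs 1 * σs 2).subtypePerm
        (fun x => by rw [hPσ] : ∀ x : EV, ((σs 0 * σs 1 * σs 2) x).val ∩ T = c ↔ x.val ∩ T = c)
        = 1 := Equiv.ext fun x => (hempty.false x).elim
    rw [h1, map_one]

theorem sign_K (σK : Equiv.Perm EV) (hK : ∀ x : EV, (σK x).val = symmDiff x.val {0,3}) :
    Equiv.Perm.sign σK = 1 := by
  have hun : ({0,3} : Finset (Fin 6)) ∪ {1,2,4,5} = Finset.univ := by decide
  have hdisj : ({0,3} : Finset (Fin 6)) ∩ {1,2,4,5} = ∅ := by decide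
  have hP : ∀ x : EV, (σK x).val ∩ {1,2,4,5} = x.val ∩ {1,2,4,5} := by
    intro x
    rw [hK, symmDiff_inter]
    have : ({0,3} : Finset (Fin 6)) ∩ {1,2,4,5} = ∅ := by decide
    rw [this]
    have : symmDiff (x.val ∩ {1,2,4,5}) (∅ : Finset (Fin 6)) = x.val ∩ {1,2,4,5} := by
      rw [← Finset.bot_eq_empty, symmDiff_bot]
    rw [this]
  rw [sign_eq_prod_fiber_signs σK (fun x => x.val ∩ {1,2,4,5}) hP]
  have step : ∀ c : Finset (Fin 6),
      Equiv.Perm.sign (σK.subtypePerm (p := fun x : EV => x.val ∩ {1,2,4,5} = c)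
        (fun x => by rw [hP] : ∀ x : EV, (σK x).val ∩ {1,2,4,5} = c ↔ x.val ∩ {1,2,4,5} = c))
      = (if c ⊆ {1,2,4,5} then (-1 : ℤˣ) else 1) := by
    intro c
    by_cases hc : c ⊆ {1,2,4,5}
    · rw [if_pos hc]
      set e := fibEquiv {0,3} {1,2,4,5} hun hdisj c hc with he
      rw [← Equiv.Perm.sign_permCongr e]
      apply decK ⟨c.card % 2, by omega⟩
      intro a
      have hsymmval : ((e.symm a).val).val = a.val ∪ c := rfl
      show (σK ((e.symm a).val)).val ∩ {0,3} = symmDiff a.val {0,3}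
      rw [hK, hsymmval, symmDiff_inter, union_c_inter_S {0,3} {1,2,4,5} hdisj a.2.1 hc,
        Finset.inter_self]
    · rw [if_neg hc]
      have hempty : IsEmpty {x : EV // x.val ∩ {1,2,4,5} = c} :=
        ⟨fun x => hc (x.2 ▸ Finset.inter_subset_right)⟩
      have h1 : σK.subtypePerm (p := fun x : EV => x.val ∩ {1,2,4,5} = c)
          (fun x => by rw [hP] : ∀ x : EV, (σK x).val ∩ {1,2,4,5} = c ↔ x.val ∩ {1,2,4,5} = c)
          = 1 := Equiv.ext fun x => (hempty.false x).elim
      rw [h1, map_one]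
  rw [Finset.prod_congr rfl (fun c _ => step c), decKprod]

theorem card_EV : Fintype.card EV = 32 := by decide

theorem sign_neg_of_sameCycle (R : Equiv.Perm EV) (hSC : ∀ x y : EV, R.SameCycle x y) :
    Equiv.Perm.sign R = -1 := by
  have hne2 : (⟨∅, by decide⟩ : EV) ≠ ⟨{0,1}, by decide⟩ := by
    intro h
    exact absurd (congrArg Subtype.val h) (by decide)
  have hmove : ∃ x : EV, R x ≠ x := by
    by_contra h
    push_neg at h
    obtain ⟨k, hk⟩ := hSC ⟨∅, by decide⟩ ⟨{0,1}, by decide⟩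
    rw [Equiv.Perm.zpow_apply_eq_self_of_apply_eq_self (h _)] at hk
    exact hne2 hk
  obtain ⟨x, hx⟩ := hmove
  have hcyc : R.IsCycle := ⟨x, hx, fun y _ => hSC x y⟩
  have hfix : ∀ y : EV, R y ≠ y := by
    intro y hy
    obtain ⟨k, hk⟩ := hSC y x
    rw [Equiv.Perm.zpow_apply_eq_self_of_apply_eq_self hy] at hk
    rw [← hk] at hx
    exact hx hy
  have hsupp : R.support = Finset.univ :=
    Finset.eq_univ_of_forall fun y => Equiv.Perm.mem_support.mpr (hfix y)
  rw [hcyc.sign, hsupp, Finset.card_univ, card_EV]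
  decide

theorem sameCycle_of_ham (Mi Mj : Set (Sym2 V6)) (f g : V6 → V6)
    (hfu : ∀ (v : V6) (e : Sym2 V6), e ∈ Mi → v ∈ e → e = s(v, f v))
    (hgu : ∀ (v : V6) (e : Sym2 V6), e ∈ Mj → v ∈ e → e = s(v, g v))
    (hfp : ∀ v : V6, (f v).card % 2 = (v.card + 1) % 2)
    (hgp : ∀ v : V6, (g v).card % 2 = (v.card + 1) % 2)
    (hfi : ∀ v, f (f v) = v) (hgi : ∀ v, g (g v) = v)
    (R : Equiv.Perm EV) (hR : ∀ x : EV, (R x).val = g (f x.val))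
    (ham : IsHamCycleSet (Mi ∪ Mj)) : ∀ x y : EV, R.SameCycle x y := by
  classical
  obtain ⟨v₀, w, hw, -⟩ := ham
  have hadj : ∀ u u' : V6, (SimpleGraph.fromEdgeSet (Mi ∪ Mj)).Adj u u' →
      u' = f u ∨ u' = g u := by
    intro u u' h
    rw [SimpleGraph.fromEdgeSet_adj] at h
    rcases h.1 with hm | hm
    · exact Or.inl (Sym2.congr_right.mp (hfu u s(u, u') hm (Sym2.mem_mk_left u u')))
    · exact Or.inr (Sym2.congr_right.mp (hgu u s(u, u') hm (Sym2.mem_mk_left u u')))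
  have hgp0 : ∀ u : V6, ¬ u.card % 2 = 0 → (g u).card % 2 = 0 := by
    intro u h
    have := hgp u
    omega
  let pm : V6 → EV := fun u => if h : u.card % 2 = 0 then ⟨u, h⟩ else ⟨g u, hgp0 u h⟩
  have hpm_even : ∀ (u : V6) (h : u.card % 2 = 0), (pm u).val = u := by
    intro u h
    simp only [pm, dif_pos h]
  have hpm_odd : ∀ (u : V6) (h : ¬ u.card % 2 = 0), (pm u).val = g u := by
    intro u h
    simp only [pm, dif_neg h]
  have step : ∀ u u' : V6, (SimpleGraph.fromEdgeSet (Mi ∪ Mj)).Adj u u' →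
      R.SameCycle (pm u) (pm u') := by
    intro u u' hA
    rcases hadj u u' hA with h | h
    · subst h
      by_cases hu : u.card % 2 = 0
      · -- u even, u' = f u
        have hfodd : ¬ (f u).card % 2 = 0 := by
          have h1 := hfp u
          omega
        refine ⟨1, ?_⟩
        apply Subtype.ext
        rw [zpow_one, hR]
        rw [hpm_even u hu, hpm_odd (f u) hfodd]
      · have hfeven : (f u).card % 2 = 0 := by
          have h1 := hfp u
          omega
        have hrev : R.SameCycle (pm (f u)) (pm u) := by
          refine ⟨1, ?_⟩
          apply Subtype.ext
          rw [zpow_one, hR]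
          rw [hpm_even (f u) hfeven, hpm_odd u hu, hfi]
        exact hrev.symm
    · subst h
      by_cases hu : u.card % 2 = 0
      · have hgodd : ¬ (g u).card % 2 = 0 := by
          have := hgp u
          omega
        have : pm (g u) = pm u := by
          apply Subtype.ext
          rw [hpm_odd (g u) hgodd, hpm_even u hu, hgi]
        rw [this]
      · have hgeven : (g u).card % 2 = 0 := hgp0 u hu
        have : pm (g u) = pm u := by
          apply Subtype.ext
          rw [hpm_even (g u) hgeven, hpm_odd u hu]
        rw [this]
  have walkrec : ∀ (u u' : V6) (p : (SimpleGraph.fromEdgeSet (Mi ∪ Mj)).Walk u u'),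
      R.SameCycle (pm u) (pm u') := by
    intro u u' p
    induction p with
    | nil => exact Equiv.Perm.SameCycle.refl _ _
    | cons h p ih => exact (step _ _ h).trans ih
  intro x y
  have h1 : pm x.val = x := Subtype.ext (hpm_even x.val x.2)
  have h2 : pm y.val = y := Subtype.ext (hpm_even y.val y.2)
  have hx := walkrec v₀ x.val (w.takeUntil x.val (hw.mem_support x.val))
  have hy := walkrec v₀ y.val (w.takeUntil y.val (hw.mem_support y.val))
  have := hx.symm.trans hy
  rwa [h1, h2] at this

lemma symmDiff_pair_cancel (a b c : V6) :
    symmDiff (symmDiff a c) (symmDiff b c) = symmDiff a b := by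
  rw [symmDiff_assoc, symmDiff_comm b c, symmDiff_symmDiff_cancel_left]

lemma card_symmDiff_single (u : V6) (d : Fin 6) :
    (symmDiff u {d}).card % 2 = (u.card + 1) % 2 := by
  obtain ⟨k, hk⟩ := card_symmDiff_add u {d}
  rw [Finset.card_singleton] at hk
  omega

lemma card_symmDiff_two (u : V6) :
    (symmDiff u {0,3}).card % 2 = u.card % 2 := by
  obtain ⟨k, hk⟩ := card_symmDiff_add u {0,3}
  have : ({0,3} : Finset (Fin 6)).card = 2 := by decide
  rw [this] at hk
  omega

lemma singleton_inter_A_lt {d : Fin 6} (h : (d:ℕ) < 3) :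
    ({d} : Finset (Fin 6)) ∩ {0,1,2} = {d} := by revert h; revert d; decide

lemma singleton_inter_B_lt {d : Fin 6} (h : (d:ℕ) < 3) :
    ({d} : Finset (Fin 6)) ∩ {3,4,5} = ∅ := by revert h; revert d; decide

lemma singleton_inter_A_ge {d : Fin 6} (h : ¬ (d:ℕ) < 3) :
    ({d} : Finset (Fin 6)) ∩ {0,1,2} = ∅ := by revert h; revert d; decide

lemma singleton_inter_B_ge {d : Fin 6} (h : ¬ (d:ℕ) < 3) :
    ({d} : Finset (Fin 6)) ∩ {3,4,5} = {d} := by revert h; revert d; decide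

lemma symmDiff_empty_fin (a : V6) : symmDiff a (∅ : Finset (Fin 6)) = a := by
  rw [← Finset.bot_eq_empty, symmDiff_bot]

lemma triple_cancel (a : V6) :
    symmDiff (symmDiff (symmDiff a {0}) {0,3}) {3} = a := by
  rw [symmDiff_assoc, symmDiff_assoc]
  have h : symmDiff ({0} : Finset (Fin 6)) (symmDiff {0,3} {3}) = ∅ := by decide
  rw [h, symmDiff_empty_fin]

end S10

section S10main
open S10 Equiv Equiv.Perm

set_option maxHeartbeats 2000000 in
theorem statement10' :
    ¬ ∃ M : Fin (3 + 3) → Set (Sym2 (Finset (Fin (3 + 3)))),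
        IsFactorization (cube (3 + 3)) M ∧ DirectionRespecting 3 3 M ∧
        ∀ i j : Fin (3 + 3), (i : ℕ) < 3 → 3 ≤ (j : ℕ) →
          IsHamCycleSet (M i ∪ M j) := by
  rintro ⟨M, ⟨hPM, hDisj, -⟩, hDR, hHam⟩
  classical
  -- extract matching functions
  have hex : ∀ (i : Fin 6) (v : V6), ∃! e, e ∈ M i ∧ v ∈ e := fun i v => (hPM i).2 v
  have hEc : ∀ (i : Fin 6) (v : V6), (hex i v).exists.choose ∈ M i ∧ v ∈ (hex i v).exists.choose :=
    fun i v => (hex i v).exists.choose_spec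
  set f : Fin 6 → V6 → V6 := fun i v => Sym2.Mem.other' (hEc i v).2 with hfdef
  have hfe : ∀ (i : Fin 6) (v : V6), s(v, f i v) ∈ M i := by
    intro i v
    have h := Sym2.other_spec' (hEc i v).2
    rw [hfdef]
    rw [h]
    exact (hEc i v).1
  have hfu : ∀ (i : Fin 6) (v : V6) (e : Sym2 V6), e ∈ M i → v ∈ e → e = s(v, f i v) := by
    intro i v e he hv
    have h1 : e = (hex i v).exists.choose := (hex i v).unique ⟨he, hv⟩ (hEc i v)
    rw [h1, ← Sym2.other_spec' (hEc i v).2]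
  have hcard : ∀ (i : Fin 6) (v : V6), (symmDiff v (f i v)).card = 1 := by
    intro i v
    have hedge := (hPM i).1 (hfe i v)
    rw [SimpleGraph.mem_edgeSet] at hedge
    exact hedge
  have hflip : ∀ (i : Fin 6) (v : V6), (f i v).card % 2 = (v.card + 1) % 2 :=
    fun i v => parity_flip (hcard i v)
  have hinv : ∀ (i : Fin 6) (v : V6), f i (f i v) = v := by
    intro i v
    have h1 := hfu i (f i v) s(v, f i v) (hfe i v) (Sym2.mem_mk_right v _)
    rw [Sym2.eq_swap] at h1
    exact (Sym2.congr_right.mp h1).symm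
  have hdistinct : ∀ (i j : Fin 6), i ≠ j → ∀ v : V6, f i v ≠ f j v := by
    intro i j hij v h
    have h2 := hfe j v
    rw [← h] at h2
    exact Set.disjoint_left.mp (hDisj i j hij) (hfe i v) h2
  have hfd : ∀ (i : Fin 6) (v : V6),
      ∃ d : Fin 6, f i v = symmDiff v {d} ∧ ((d:ℕ) < 3 ↔ (i:ℕ) < 3) := by
    intro i v
    obtain ⟨d, hd⟩ := Finset.card_eq_one.mp (hcard i v)
    refine ⟨d, ?_, hDR i v (f i v) (hfe i v) d (hd ▸ Finset.mem_singleton_self d)⟩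
    have := symmDiff_symmDiff_cancel_left (a := v) (b := f i v)
    rw [hd] at this
    exact this.symm
  -- direction fixing facts
  have hBfix : ∀ (i : Fin 6), (i:ℕ) < 3 → ∀ v : V6, f i v ∩ {3,4,5} = v ∩ {3,4,5} := by
    intro i hi v
    obtain ⟨d, hd, hdi⟩ := hfd i v
    rw [hd, symmDiff_inter, singleton_inter_B_lt (hdi.mpr hi), symmDiff_empty_fin]
  have hAfix : ∀ (j : Fin 6), ¬ (j:ℕ) < 3 → ∀ v : V6, f j v ∩ {0,1,2} = v ∩ {0,1,2} := by
    intro j hj v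
    obtain ⟨d, hd, hdi⟩ := hfd j v
    rw [hd, symmDiff_inter, singleton_inter_A_ge (fun h => hj (hdi.mp h)), symmDiff_empty_fin]
  -- the permutations
  have hPa_par : ∀ (i : Fin 6) (v : V6), (symmDiff (f i v) {0}).card % 2 = v.card % 2 := by
    intro i v
    have h1 := card_symmDiff_single (f i v) 0
    have h2 := hflip i v
    omega
  have hPa_inv1 : ∀ (i : Fin 6) (v : V6),
      f i (symmDiff (symmDiff (f i v) {0}) {0}) = v := by
    intro i v
    rw [symmDiff_symmDiff_cancel_right, hinv]
  have hPa_inv2 : ∀ (i : Fin 6) (v : V6),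
      symmDiff (f i (f i (symmDiff v {0}))) {0} = v := by
    intro i v
    rw [hinv, symmDiff_symmDiff_cancel_right]
  set Pa : Fin 6 → Perm EV := fun i =>
    mkE (fun v => symmDiff (f i v) {0}) (fun v => f i (symmDiff v {0}))
      (hPa_par i) (hPa_inv1 i) (hPa_inv2 i) with hPadef
  have hTa_par : ∀ (j : Fin 6) (v : V6), (f j (symmDiff v {3})).card % 2 = v.card % 2 := by
    intro j v
    have h1 := card_symmDiff_single v 3
    have h2 := hflip j (symmDiff v {3})
    omega
  have hTa_inv1 : ∀ (j : Fin 6) (v : V6),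
      symmDiff (f j (f j (symmDiff v {3}))) {3} = v := by
    intro j v
    rw [hinv, symmDiff_symmDiff_cancel_right]
  have hTa_inv2 : ∀ (j : Fin 6) (v : V6),
      f j (symmDiff (symmDiff (f j v) {3}) {3}) = v := by
    intro j v
    rw [symmDiff_symmDiff_cancel_right, hinv]
  set Ta : Fin 6 → Perm EV := fun j =>
    mkE (fun v => f j (symmDiff v {3})) (fun v => symmDiff (f j v) {3})
      (hTa_par j) (hTa_inv1 j) (hTa_inv2 j) with hTadef
  set Ka : Perm EV :=
    mkE (fun v => symmDiff v {0,3}) (fun v => symmDiff v {0,3})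
      card_symmDiff_two (fun v => symmDiff_symmDiff_cancel_right _ v)
      (fun v => symmDiff_symmDiff_cancel_right _ v) with hKadef
  have hRa_par : ∀ (i j : Fin 6) (v : V6), (f j (f i v)).card % 2 = v.card % 2 := by
    intro i j v
    have h1 := hflip i v
    have h2 := hflip j (f i v)
    omega
  have hRa_inv1 : ∀ (i j : Fin 6) (v : V6), f i (f j (f j (f i v))) = v := by
    intro i j v
    rw [hinv, hinv]
  have hRa_inv2 : ∀ (i j : Fin 6) (v : V6), f j (f i (f i (f j v))) = v := by
    intro i j v
    rw [hinv, hinv]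
  set Ra : Fin 6 → Fin 6 → Perm EV := fun i j =>
    mkE (fun v => f j (f i v)) (fun v => f i (f j v))
      (hRa_par i j) (hRa_inv1 i j) (hRa_inv2 i j) with hRadef
  -- decomposition
  have hdecomp : ∀ i j : Fin 6, Ra i j = Ta j * Ka * Pa i := by
    intro i j
    apply Equiv.ext
    intro x
    apply Subtype.ext
    show f j (f i x.val) =
      f j (symmDiff (symmDiff (symmDiff (f i x.val) {0}) {0,3}) {3})
    rw [triple_cancel]
  -- sign of Ka
  have hKsign : Perm.sign Ka = 1 := sign_K Ka (fun x => rfl)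
  -- left product sign
  have hunA : ({0,1,2} : Finset (Fin 6)) ∪ {3,4,5} = Finset.univ := by decide
  have hdisjA : ({0,1,2} : Finset (Fin 6)) ∩ {3,4,5} = ∅ := by decide
  have hunB : ({3,4,5} : Finset (Fin 6)) ∪ {0,1,2} = Finset.univ := by decide
  have hdisjB : ({3,4,5} : Finset (Fin 6)) ∩ {0,1,2} = ∅ := by decide
  set embL : Fin 3 → Fin 6 := fun k => ⟨k.val, by omega⟩ with hembL
  set embR : Fin 3 → Fin 6 := fun k => ⟨k.val + 3, by omega⟩ with hembR
  have hLsign : Perm.sign (Pa (embL 0) * Pa (embL 1) * Pa (embL 2)) = 1 := by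
    apply sign_side_prod {0,1,2} {3,4,5} hunA hdisjA 0 decL (fun k => Pa (embL k))
    · intro k x
      show symmDiff (f (embL k) x.val) {0} ∩ {3,4,5} = x.val ∩ {3,4,5}
      rw [symmDiff_inter]
      have h0 : ({0} : Finset (Fin 6)) ∩ {3,4,5} = ∅ := by decide
      rw [h0, symmDiff_empty_fin, hBfix (embL k) k.isLt]
    · intro k x
      obtain ⟨d, hd, hdi⟩ := hfd (embL k) x.val
      have hdlt : (d:ℕ) < 3 := hdi.mpr k.isLt
      show (symmDiff (symmDiff (x.val ∩ {0,1,2}) {0})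
        (symmDiff (f (embL k) x.val) {0} ∩ {0,1,2})).card = 1
      rw [hd, symmDiff_inter, symmDiff_inter, singleton_inter_A_lt hdlt]
      have h0 : ({0} : Finset (Fin 6)) ∩ {0,1,2} = {0} := by decide
      rw [h0, symmDiff_pair_cancel, symmDiff_symmDiff_cancel_left, Finset.card_singleton]
    · intro k l hkl x h
      have hklf : embL k ≠ embL l := by
        intro he
        have h' : (embL k).val = (embL l).val := congrArg Fin.val he
        simp only [hembL] at h'
        exact hkl (Fin.ext h')
      have h0 : ({0} : Finset (Fin 6)) ∩ {0,1,2} = {0} := by decide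
      rw [show (Pa (embL k) x).val = symmDiff (f (embL k) x.val) {0} from rfl,
        show (Pa (embL l) x).val = symmDiff (f (embL l) x.val) {0} from rfl,
        symmDiff_inter, symmDiff_inter, h0] at h
      have h2 : f (embL k) x.val ∩ {0,1,2} = f (embL l) x.val ∩ {0,1,2} := by
        have := congrArg (fun t => symmDiff t ({0} : Finset (Fin 6))) h
        simpa only [symmDiff_symmDiff_cancel_right] using this
      have h3 : f (embL k) x.val = f (embL l) x.val := by
        have hs1 := split_ST {0,1,2} {3,4,5} hunA (f (embL k) x.val)
        have hs2 := split_ST {0,1,2} {3,4,5} hunA (f (embL l) x.val)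
        rw [← hs1, ← hs2, h2, hBfix (embL k) k.isLt, hBfix (embL l) l.isLt]
      exact hdistinct (embL k) (embL l) hklf x.val h3
  -- right product sign
  have hembR_ge : ∀ k : Fin 3, ¬ ((embR k : Fin 6) : ℕ) < 3 := by
    intro k
    simp [hembR]
  have hRsignprod : Perm.sign (Ta (embR 0) * Ta (embR 1) * Ta (embR 2)) = 1 := by
    apply sign_side_prod {3,4,5} {0,1,2} hunB hdisjB 3 decR (fun k => Ta (embR k))
    · intro k x
      show f (embR k) (symmDiff x.val {3}) ∩ {0,1,2} = x.val ∩ {0,1,2}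
      rw [hAfix (embR k) (hembR_ge k), symmDiff_inter]
      have h3 : ({3} : Finset (Fin 6)) ∩ {0,1,2} = ∅ := by decide
      rw [h3, symmDiff_empty_fin]
    · intro k x
      obtain ⟨d, hd, hdi⟩ := hfd (embR k) (symmDiff x.val {3})
      have hdge : ¬ (d:ℕ) < 3 := fun h => (hembR_ge k) (hdi.mp h)
      show (symmDiff (symmDiff (x.val ∩ {3,4,5}) {3})
        (f (embR k) (symmDiff x.val {3}) ∩ {3,4,5})).card = 1
      rw [hd, symmDiff_inter, symmDiff_inter, singleton_inter_B_ge hdge]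
      have h3 : ({3} : Finset (Fin 6)) ∩ {3,4,5} = {3} := by decide
      rw [h3, symmDiff_symmDiff_cancel_left, Finset.card_singleton]
    · intro k l hkl x h
      have hklf : embR k ≠ embR l := by
        intro he
        have := congrArg Fin.val he
        simp only [hembR] at this
        exact hkl (Fin.ext (by omega))
      rw [show (Ta (embR k) x).val = f (embR k) (symmDiff x.val {3}) from rfl,
        show (Ta (embR l) x).val = f (embR l) (symmDiff x.val {3}) from rfl] at h
      have h3 : f (embR k) (symmDiff x.val {3}) = f (embR l) (symmDiff x.val {3}) := by
        have hs1 := split_ST {3,4,5} {0,1,2} hunB (f (embR k) (symmDiff x.val {3}))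
        have hs2 := split_ST {3,4,5} {0,1,2} hunB (f (embR l) (symmDiff x.val {3}))
        rw [← hs1, ← hs2, h, hAfix (embR k) (hembR_ge k), hAfix (embR l) (hembR_ge l)]
      exact hdistinct (embR k) (embR l) hklf _ h3
  -- the nine Hamilton sign equations
  have h9 : ∀ k l : Fin 3,
      Perm.sign (Ta (embR l)) * Perm.sign Ka * Perm.sign (Pa (embL k)) = -1 := by
    intro k l
    have hham := hHam (embL k) (embR l) k.isLt (by simp [hembR])
    have hsc := sameCycle_of_ham (M (embL k)) (M (embR l)) (f (embL k)) (f (embR l))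
      (hfu (embL k)) (hfu (embR l)) (hflip (embL k)) (hflip (embR l))
      (hinv (embL k)) (hinv (embR l)) (Ra (embL k) (embR l)) (fun x => rfl) hham
    have hsig := sign_neg_of_sameCycle (Ra (embL k) (embR l)) hsc
    rw [hdecomp (embL k) (embR l), map_mul, map_mul] at hsig
    exact hsig
  -- final units algebra
  set a : Fin 3 → ℤˣ := fun k => Perm.sign (Pa (embL k)) with ha
  set t : Fin 3 → ℤˣ := fun l => Perm.sign (Ta (embR l)) with ht
  have h9' : ∀ k l : Fin 3, t l * a k = -1 := by
    intro k l
    have := h9 k l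
    rw [hKsign, mul_one] at this
    exact this
  have hLp : a 0 * a 1 * a 2 = 1 := by
    have := hLsign
    rw [map_mul, map_mul] at this
    exact this
  have hRp : t 0 * t 1 * t 2 = 1 := by
    have := hRsignprod
    rw [map_mul, map_mul] at this
    exact this
  have ha01 : a 1 = a 0 := mul_left_cancel ((h9' 1 0).trans (h9' 0 0).symm)
  have ha02 : a 2 = a 0 := mul_left_cancel ((h9' 2 0).trans (h9' 0 0).symm)
  have ha0 : a 0 = 1 := by
    rw [ha01, ha02] at hLp
    have h2 := Int.units_mul_self (a 0)
    calc a 0 = a 0 * (a 0 * a 0) := by rw [h2, mul_one]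
      _ = a 0 * a 0 * a 0 := by rw [mul_assoc]
      _ = 1 := hLp
  have htneg : ∀ l : Fin 3, t l = -1 := by
    intro l
    have := h9' 0 l
    rw [ha0, mul_one] at this
    exact this
  rw [htneg 0, htneg 1, htneg 2] at hRp
  norm_num at hRp

end S10main

/-- There is no direction respecting 1-factorization `M₁, …, M₆` of `Q₆` (w.r.t. the
split `3 + 3`) such that `M_i ∪ M_j` is a Hamilton cycle for all `i ∈ {1,2,3}`,
`j ∈ {4,5,6}`. -/
theorem statement10 :
    ¬ ∃ M : Fin (3 + 3) → Set (Sym2 (Finset (Fin (3 + 3)))),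
        IsFactorization (cube (3 + 3)) M ∧ DirectionRespecting 3 3 M ∧
        ∀ i j : Fin (3 + 3), (i : ℕ) < 3 → 3 ≤ (j : ℕ) →
          IsHamCycleSet (M i ∪ M j) := by
  exact statement10'
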